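/- Let λ > 0 be a real number and define the vector field f₀ : ℝ² → ℝ² by f₀(x,y) = (−2λy(x²+y²) − 2y(2x²+y²), 4λx(x²+y²) + 2x(2x²+y²)). Then the function V(x,y) = (2x²+y²)^λ (x²+y²) satisfies ⟨∇V(x,y), f₀(x,y)⟩ = 0 for all (x,y) ≠ (0,0); that is, V is constant along trajectories of ẋ = f₀(x) (the origin is a center). -/

import Mathlib

open RealInnerProductSpace

noncomputable def prj (i : Fin 2) : EuclideanSpace ℝ (Fin 2) →L[ℝ] ℝ := EuclideanSpace.proj i

/-- For `λ > 0`, the vector field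
`f₀(x,y) = (−2λy(x²+y²) − 2y(2x²+y²), 4λx(x²+y²) + 2x(2x²+y²))` admits
`V(x,y) = (2x²+y²)^λ (x²+y²)` as a first integral: `⟨∇V(x,y), f₀(x,y)⟩ = 0` for all
`(x,y) ≠ (0,0)`, i.e. the origin is a center. -/
theorem center_first_integral_bacciotti_rosier
    (lam : ℝ) (hlam : 0 < lam)
    (f₀ : EuclideanSpace ℝ (Fin 2) → EuclideanSpace ℝ (Fin 2))
    (hf₀1 : ∀ p : EuclideanSpace ℝ (Fin 2),
      f₀ p 0 = -2*lam*(p 1)*((p 0)^2+(p 1)^2) - 2*(p 1)*(2*(p 0)^2+(p 1)^2))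
    (hf₀2 : ∀ p : EuclideanSpace ℝ (Fin 2),
      f₀ p 1 = 4*lam*(p 0)*((p 0)^2+(p 1)^2) + 2*(p 0)*(2*(p 0)^2+(p 1)^2))
    (V : EuclideanSpace ℝ (Fin 2) → ℝ)
    (hV : ∀ p : EuclideanSpace ℝ (Fin 2),
      V p = (2*(p 0)^2+(p 1)^2) ^ lam * ((p 0)^2+(p 1)^2)) :
    ∀ p : EuclideanSpace ℝ (Fin 2), p ≠ 0 → ⟪gradient V p, f₀ p⟫ = 0 := by
  intro p hp
  have hxy : p 0 ≠ 0 ∨ p 1 ≠ 0 := by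
    by_contra h
    push_neg at h
    apply hp
    ext i
    fin_cases i <;> simp [h.1, h.2]
  have hu : (0:ℝ) < 2*(p 0)^2 + (p 1)^2 := by
    rcases hxy with h | h <;> positivity
  -- derivatives
  have h0 : HasFDerivAt (fun q : EuclideanSpace ℝ (Fin 2) => q 0) (prj 0) p :=
    (prj 0).hasFDerivAt
  have h1 : HasFDerivAt (fun q : EuclideanSpace ℝ (Fin 2) => q 1) (prj 1) p :=
    (prj 1).hasFDerivAt
  have hsq0 := (hasDerivAt_pow 2 (p 0)).comp_hasFDerivAt p h0
  have hsq1 := (hasDerivAt_pow 2 (p 1)).comp_hasFDerivAt p h1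
  have hU := (hsq0.const_mul (2:ℝ)).add hsq1
  have hR := hsq0.add hsq1
  have hP := hU.rpow_const (p := lam) (Or.inl hu.ne')
  have hM := hP.mul hR
  have hfun : V = fun q : EuclideanSpace ℝ (Fin 2) =>
      (2*(q 0)^2+(q 1)^2) ^ lam * ((q 0)^2+(q 1)^2) := funext hV
  set x := p 0 with hx
  set y := p 1 with hy
  set u : ℝ := 2*x^2+y^2 with hudef
  set r : ℝ := x^2+y^2 with hrdef
  set g : EuclideanSpace ℝ (Fin 2) :=
    (WithLp.equiv 2 (Fin 2 → ℝ)).symm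
      ![lam * u^(lam-1) * (4*x) * r + u^lam * (2*x),
        lam * u^(lam-1) * (2*y) * r + u^lam * (2*y)] with hg
  have hgrad : HasGradientAt V g p := by
    rw [hasGradientAt_iff_hasFDerivAt, hfun]
    convert hM using 1
    · rfl
    · rfl
    ext w
    simp only [InnerProductSpace.toDual_apply_apply, PiLp.inner_apply, RCLike.inner_apply,
      starRingEnd_apply, star_trivial, Fin.sum_univ_two, hg,
      WithLp.equiv_symm_apply, WithLp.ofLp_toLp, Matrix.cons_val_zero, Matrix.cons_val_one, Matrix.head_cons,
      ContinuousLinearMap.add_apply, ContinuousLinearMap.smul_apply, smul_eq_mul,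
      prj, PiLp.proj_apply, Function.comp_apply]
    push_cast
    simp only [Pi.add_apply, Function.comp_apply, hudef, hrdef, hx, hy]
    ring
  rw [hgrad.gradient]
  have hABraw := Real.rpow_sub_one hu.ne' lam
  have hAB : u ^ lam = u ^ (lam - 1) * u := by
    rw [hABraw]; field_simp
  have hinner : ⟪g, f₀ p⟫ = g 0 * f₀ p 0 + g 1 * f₀ p 1 := by
    simp [PiLp.inner_apply, Fin.sum_univ_two]
    ring
  rw [hinner, hf₀1, hf₀2]
  have hg0 : g 0 = lam * u^(lam-1) * (4*x) * r + u^lam * (2*x) := by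
    simp [hg]
  have hg1 : g 1 = lam * u^(lam-1) * (2*y) * r + u^lam * (2*y) := by
    simp [hg]
  rw [hg0, hg1, ← hx, ← hy, ← hudef, ← hrdef]
  linear_combination (4*lam*x*y*r) * hAB
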